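/- Let $M$ be an $m \times n$ matrix over $\mathbf{F}_q$ of rank $r$ with columns $v_1, \ldots, v_n$, and suppose the submatrix formed by the last $k$ columns $v_{n-k+1}, \ldots, v_n$ has rank $r'$. Then the number of tuples $(w_1, \ldots, w_{n-k}) \in \mathbf{F}_q^{n-k}$ such that appending the row $(w_1, \ldots, w_{n-k}, 0, \ldots, 0)$ (with $k$ trailing zeros) to $M$ yields a matrix of rank $r$ is exactly $q^{r - r'}$; for the remaining $q^{n-k} - q^{r-r'}$ tuples, the augmented matrix has rank $r+1$. -/

import Mathlib

open Module Submodule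

section aux
variable {F : Type*} [Field F] {m n : ℕ}

lemma range_snoc' (M : Fin m → Fin n → F) (v : Fin n → F) :
    Set.range (Fin.snoc M v : Fin (m+1) → Fin n → F) = insert v (Set.range M) := by
  ext y
  constructor
  · rintro ⟨i, rfl⟩
    induction i using Fin.lastCases with
    | last => simp
    | cast j => simp
  · rintro (rfl | ⟨j, rfl⟩)
    · exact ⟨Fin.last m, by simp⟩
    · exact ⟨j.castSucc, by simp⟩

lemma rank_snoc_mem (M : Matrix (Fin m) (Fin n) F) (v : Fin n → F)
    (hv : v ∈ span F (Set.range M)) :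
    (Matrix.of (Fin.snoc M v)).rank = M.rank := by
  rw [Matrix.rank_eq_finrank_span_row, Matrix.rank_eq_finrank_span_row]
  unfold Matrix.row
  have hrange : Set.range ((Matrix.of (Fin.snoc M v) : Matrix (Fin (m+1)) (Fin n) F))
      = insert v (Set.range M) := range_snoc' M v
  rw [hrange, Submodule.span_insert_eq_span hv]

lemma rank_snoc_not_mem (M : Matrix (Fin m) (Fin n) F) (v : Fin n → F)
    (hv : v ∉ span F (Set.range M)) :
    (Matrix.of (Fin.snoc M v)).rank = M.rank + 1 := by
  haveI := FiniteDimensional.span_of_finite F (Set.finite_range M)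
  rw [Matrix.rank_eq_finrank_span_row, Matrix.rank_eq_finrank_span_row]
  unfold Matrix.row
  have h0 : v ≠ 0 := fun h => hv (h ▸ (span F (Set.range M)).zero_mem)
  have hrange : Set.range ((Matrix.of (Fin.snoc M v) : Matrix (Fin (m+1)) (Fin n) F))
      = insert v (Set.range M) := range_snoc' M v
  rw [hrange, Submodule.span_insert]
  have hd : Disjoint (F ∙ v) (span F (Set.range M)) :=
    ((Submodule.disjoint_span_singleton' h0).mpr hv).symm
  have := Submodule.finrank_sup_add_finrank_inf_eq (F ∙ v) (span F (Set.range M))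
  rw [hd.eq_bot, finrank_bot, add_zero, finrank_span_singleton h0] at this
  omega
end aux

theorem stmt_2 (q m a k r r' : ℕ)
    (F : Type*) [Field F] [Fintype F] (hq : Fintype.card F = q)
    (M : Matrix (Fin m) (Fin (a + k)) F)
    (hM : M.rank = r)
    (hM' : (M.submatrix id (Fin.natAdd a)).rank = r') :
    Nat.card {w : Fin a → F //
        (Matrix.of (Fin.snoc M (Fin.addCases (fun j => w j) (fun _ => (0 : F))))).rank = r}
      = q ^ (r - r') ∧
    Nat.card {w : Fin a → F //
        (Matrix.of (Fin.snoc M (Fin.addCases (fun j => w j) (fun _ => (0 : F))))).rank = r + 1}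
      = q ^ a - q ^ (r - r') := by
  classical
  set R : Submodule F (Fin (a+k) → F) := span F (Set.range M) with hR
  haveI : FiniteDimensional F R := FiniteDimensional.span_of_finite F (Set.finite_range M)
  have hfr : finrank F R = r := by rw [← hM, Matrix.rank_eq_finrank_span_row]; rfl
  set π : (Fin (a+k) → F) →ₗ[F] (Fin k → F) := LinearMap.funLeft F F (Fin.natAdd a) with hπ
  set f : R →ₗ[F] (Fin k → F) := π.domRestrict R with hf
  -- dimension of kernel
  have hrng : finrank F (LinearMap.range f) = r' := by
    have h2 : LinearMap.range f = R.map π := LinearMap.range_domRestrict R π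
    have h3 : R.map π = span F (Set.range (M.submatrix id (Fin.natAdd a))) := by
      rw [hR, Submodule.map_span]
      congr 1
      refine (Set.range_comp _ _).symm.trans ?_
      rfl
    rw [h2, h3, ← hM', Matrix.rank_eq_finrank_span_row]; rfl
  have hker : finrank F (LinearMap.ker f) = r - r' := by
    have h1 := LinearMap.finrank_range_add_finrank_ker f
    rw [hrng, hfr] at h1
    omega
  -- rank conditions
  have key : ∀ w : Fin a → F,
      (Matrix.of (Fin.snoc M (Fin.addCases (fun j => w j) (fun _ => (0:F))))).rank = r
        ↔ (Fin.addCases (fun j => w j) (fun _ => (0:F)) : Fin (a+k) → F) ∈ R := by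
    intro w
    set v : Fin (a+k) → F := Fin.addCases (fun j => w j) (fun _ => (0:F)) with hv
    by_cases hvm : v ∈ R
    · simp [rank_snoc_mem M v hvm, hM, hvm]
    · rw [rank_snoc_not_mem M v hvm, hM]
      simp only [hvm, iff_false]
      omega
  have key2 : ∀ w : Fin a → F,
      (Matrix.of (Fin.snoc M (Fin.addCases (fun j => w j) (fun _ => (0:F))))).rank = r + 1
        ↔ ¬ ((Fin.addCases (fun j => w j) (fun _ => (0:F)) : Fin (a+k) → F) ∈ R) := by
    intro w
    set v : Fin (a+k) → F := Fin.addCases (fun j => w j) (fun _ => (0:F)) with hv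
    by_cases hvm : v ∈ R
    · rw [rank_snoc_mem M v hvm, hM]
      simp only [hvm, not_true, iff_false]
      omega
    · simp [rank_snoc_not_mem M v hvm, hM, hvm]
  -- equivalence with kernel
  let E : {w : Fin a → F // (Fin.addCases (fun j => w j) (fun _ => (0:F)) : Fin (a+k) → F) ∈ R}
      ≃ LinearMap.ker f :=
  { toFun := fun w => ⟨⟨Fin.addCases (fun j => w.1 j) (fun _ => (0:F)), w.2⟩, by
      rw [LinearMap.mem_ker]
      ext j
      simp [hf, hπ, LinearMap.funLeft_apply]⟩
    invFun := fun x => ⟨fun j => (x.1 : Fin (a+k) → F) (Fin.castAdd k j), by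
      have h0 : ∀ j, (x.1 : Fin (a+k) → F) (Fin.natAdd a j) = 0 := by
        intro j
        have := x.2
        rw [LinearMap.mem_ker] at this
        exact congrFun this j
      have : (Fin.addCases (fun j => (x.1 : Fin (a+k) → F) (Fin.castAdd k j))
          (fun _ => (0:F)) : Fin (a+k) → F) = (x.1 : Fin (a+k) → F) := by
        funext i
        refine Fin.addCases (fun j => ?_) (fun j => ?_) i
        · simp
        · simp [h0 j]
      rw [this]
      exact x.1.2⟩
    left_inv := fun w => by
      ext j
      simp
    right_inv := fun x => by
      have h0 : ∀ j, (x.1 : Fin (a+k) → F) (Fin.natAdd a j) = 0 := by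
        intro j
        have := x.2
        rw [LinearMap.mem_ker] at this
        exact congrFun this j
      ext i
      refine Fin.addCases (fun j => ?_) (fun j => ?_) i
      · simp
      · simp [h0 j] }
  have hcard1 : Nat.card {w : Fin a → F //
      (Matrix.of (Fin.snoc M (Fin.addCases (fun j => w j) (fun _ => (0:F))))).rank = r}
      = q ^ (r - r') := by
    rw [Nat.card_congr ((Equiv.subtypeEquivRight key).trans E)]
    haveI : Fintype (LinearMap.ker f) := Fintype.ofFinite _
    rw [Nat.card_eq_fintype_card, card_eq_pow_finrank (K := F), hq, hker]
  refine ⟨hcard1, ?_⟩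
  rw [Nat.card_congr (Equiv.subtypeEquivRight key2)]
  rw [← hcard1, Nat.card_congr (Equiv.subtypeEquivRight key)]
  rw [Nat.card_eq_fintype_card, Nat.card_eq_fintype_card, Fintype.card_subtype_compl]
  congr 1
  rw [← hq]
  simp [Fintype.card_fun]
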